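/- Assume φ : A → ℝ is conserved by F, and assume there exists a subgroup K of X of finite index such that the quotient map X → X/K is injective on B + B. Then ∑_{w : B → A} φ(f(w)) = |A|^{|B| − 1} · ∑_{a ∈ A} φ(a). -/

import Mathlib

open scoped Pointwise

/-- The cellular automaton induced by a local rule `f` on neighbourhood `B`. -/
def induce {X A : Type*} [AddCommGroup X] (B : Finset X) (f : (B → A) → A)
    (a : X → A) : X → A :=
  fun x => f fun b => a (x + b.1)

/-- `ψ` is conserved by the CA induced by `f` on `B`. -/
def conserved {X A Z : Type*} [AddCommGroup X] [AddCommMonoid Z] (B : Finset X)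
    (f : (B → A) → A) (ψ : A → Z) : Prop :=
  (∃ a : A, ψ a = 0) ∧
  (∀ a : X → A, (Function.support fun x => ψ (a x)).Finite →
      (Function.support fun x => ψ (induce B f a x)).Finite) ∧
  (∀ a : X → A, (Function.support fun x => ψ (a x)).Finite →
      ∑ᶠ x, ψ (induce B f a x) = ∑ᶠ x, ψ (a x))

namespace Stmt12Aux

variable {X A : Type*} [AddCommGroup X] [DecidableEq X] [DecidableEq A] [Fintype A]

/-- configuration: pattern `p` on `R0`, vacuum `v` elsewhere -/
def CFG (R0 : Finset X) (v : A) (p : R0 → A) : X → A :=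
  fun x => if h : x ∈ R0 then p ⟨x, h⟩ else v

/-- window of a configuration at `x` -/
def WND (B : Finset X) (a : X → A) (x : X) : B → A := fun b => a (x + b.1)

/-- enlarged support set -/
def SS (B T : Finset X) : Finset X := T ∪ Finset.image₂ (fun t b => t - b) T B

noncomputable def PSI (B : Finset X) (f : (B → A) → A) (φ : A → ℝ) (hB0 : (0:X) ∈ B)
    (w : B → A) : ℝ := φ (w ⟨0, hB0⟩) - φ (f w)

noncomputable def wt (v a : A) : ℝ := if a = v then 1 - (Fintype.card A : ℝ) else 1

def wt0 (v a : A) : ℝ := if a = v then 1 else 0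

noncomputable def CF (B : Finset X) (v : A) (D : Finset X) (w : B → A) : ℝ :=
  ∏ b : B, if (b.1 ∈ D) then wt v (w b) else wt0 v (w b)

noncomputable def NU (B : Finset X) (f : (B → A) → A) (φ : A → ℝ) (hB0 : (0:X) ∈ B)
    (v : A) (D : Finset X) : ℝ :=
  ∑ w : B → A, CF B v D w * PSI B f φ hB0 w

noncomputable def WW (R0 : Finset X) (v : A) (p : R0 → A) : ℝ := ∏ r : R0, wt v (p r)

lemma sum_wt (v : A) : ∑ a : A, wt (A := A) v a = 0 := by
  have h : ∀ a : A, wt (A := A) v a = 1 - (if a = v then (Fintype.card A : ℝ) else 0) := by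
    intro a; unfold wt; split <;> simp
  simp only [h, Finset.sum_sub_distrib, Finset.sum_const, Finset.card_univ, nsmul_eq_mul,
    mul_one, Finset.sum_ite_eq', Finset.mem_univ, if_true]
  ring

lemma sumprod {ι : Type*} [Fintype ι] [DecidableEq ι] [Nonempty ι] (v : A) :
    ∑ g : ι → A, ∏ i, wt (A := A) v (g i) = 0 := by
  have h := Finset.prod_univ_sum (fun _ : ι => (Finset.univ : Finset A))
    (fun _ a => wt (A := A) v a)
  rw [Fintype.piFinset_univ] at h
  rw [← h, Finset.prod_congr rfl (fun i _ => sum_wt v)]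
  simp [Finset.prod_const, zero_pow, Fintype.card_ne_zero]

lemma vac (B : Finset X) (f : (B → A) → A) (φ : A → ℝ)
    (hyp2 : ∀ a : X → A, (Function.support fun x => φ (a x)).Finite →
      (Function.support fun x => φ (induce B f a x)).Finite)
    (hyp3 : ∀ a : X → A, (Function.support fun x => φ (a x)).Finite →
      ∑ᶠ x, φ (induce B f a x) = ∑ᶠ x, φ (a x))
    {v : A} (hv : φ v = 0) : φ (f fun _ => v) = 0 := by
  by_contra hc
  have hsupp : (Function.support fun x : X => φ ((fun _ : X => v) x)).Finite := by
    simp [hv, Function.support]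
  have h2 := hyp2 _ hsupp
  have h3 := hyp3 _ hsupp
  have huniv : (Function.support fun x : X => φ (induce B f (fun _ => v) x)) = Set.univ := by
    ext x
    simpa [Function.support, induce] using hc
  rw [huniv] at h2
  have : Finite X := Set.finite_univ_iff.mp h2
  have : Fintype X := Fintype.ofFinite X
  rw [finsum_eq_sum_of_fintype, finsum_eq_sum_of_fintype] at h3
  simp only [hv, Finset.sum_const, Finset.card_univ, smul_zero] at h3
  have hcard : Fintype.card X ≠ 0 := Fintype.card_ne_zero
  have hz : (Fintype.card X : ℝ) • φ (f fun _ => v) = 0 := by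
    rw [← h3]
    simp [induce]
  rcases smul_eq_zero.mp hz with h | h
  · exact hcard (by exact_mod_cast h)
  · exact hc h

lemma consrel (B : Finset X) (f : (B → A) → A) (φ : A → ℝ)
    (hyp3 : ∀ a : X → A, (Function.support fun x => φ (a x)).Finite →
      ∑ᶠ x, φ (induce B f a x) = ∑ᶠ x, φ (a x))
    {v : A} (hv : φ v = 0) (hfv : φ (f fun _ => v) = 0)
    (T : Finset X) (a : X → A) (ha : ∀ x, x ∉ T → a x = v) :
    ∑ x ∈ SS B T, (φ (a x) - φ (induce B f a x)) = 0 := by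
  have hsupp : Function.support (fun x => φ (a x)) ⊆ ↑T := by
    intro x hx
    by_contra hxT
    refine hx ?_
    show φ (a x) = 0
    rw [ha x (by simpa using hxT), hv]
  have hT : ↑T ⊆ (↑(SS B T) : Set X) := by
    intro x hx
    simp only [SS, Finset.coe_union, Set.mem_union, Finset.mem_coe]
    exact Or.inl hx
  have h3 := hyp3 a (Set.Finite.subset T.finite_toSet hsupp)
  have e1 : ∑ᶠ x, φ (a x) = ∑ x ∈ SS B T, φ (a x) :=
    finsum_eq_sum_of_support_subset _ (hsupp.trans hT)
  have hsupp2 : Function.support (fun x => φ (induce B f a x)) ⊆ ↑(SS B T) := by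
    intro x hx
    by_contra hxS
    apply hx
    have hb : ∀ b : B, a (x + b.1) = v := by
      intro b
      apply ha
      intro hmem
      apply hxS
      simp only [SS, Finset.coe_union, Set.mem_union, Finset.mem_coe]
      right
      exact Finset.mem_image₂.mpr ⟨x + b.1, hmem, b.1, b.2, add_sub_cancel_right x b.1⟩
    have hconst : induce B f a x = f (fun _ => v) := congrArg f (funext hb)
    simp only [hconst, hfv]
  have e2 : ∑ᶠ x, φ (induce B f a x) = ∑ x ∈ SS B T, φ (induce B f a x) :=
    finsum_eq_sum_of_support_subset _ hsupp2
  rw [Finset.sum_sub_distrib, ← e1, ← e2, h3, sub_self]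

lemma caseB (B : Finset X) (v : A) (PSI : (B → A) → ℝ) (R0 : Finset X) (x : X)
    (hx : ∀ r ∈ R0, r - x ∈ B) :
    ∑ p : R0 → A, WW R0 v p * PSI (WND B (CFG R0 v p) x)
      = ∑ w : B → A, CF B v (R0.image (fun r => r - x)) w * PSI w := by
  set D := R0.image (fun r => r - x) with hD
  have hmemD : ∀ b : B, (b.1 ∈ D ↔ x + b.1 ∈ R0) := by
    intro b
    constructor
    · intro hbD
      obtain ⟨r, hr, hrx⟩ := Finset.mem_image.mp hbD
      rw [← hrx, add_sub_cancel]
      exact hr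
    · intro h
      exact Finset.mem_image.mpr ⟨x + b.1, h, by rw [add_sub_cancel_left]⟩
  rw [← Finset.sum_filter_add_sum_filter_not Finset.univ
    (fun w : B → A => ∀ b : B, b.1 ∉ D → w b = v) (fun w => CF B v D w * PSI w)]
  have hbad : ∑ w ∈ Finset.univ.filter
      (fun w : B → A => ¬ ∀ b : B, b.1 ∉ D → w b = v), CF B v D w * PSI w = 0 := by
    apply Finset.sum_eq_zero
    intro w hw
    simp only [Finset.mem_filter, Finset.mem_univ, true_and] at hw
    push_neg at hw
    obtain ⟨b, hbD, hbv⟩ := hw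
    have hz : CF B v D w = 0 := by
      apply Finset.prod_eq_zero (Finset.mem_univ b)
      simp [hbD, wt0, hbv]
    rw [hz, zero_mul]
  rw [hbad, add_zero]
  refine Finset.sum_nbij' (fun p => WND B (CFG R0 v p) x)
    (fun w r => w ⟨r.1 - x, hx r.1 r.2⟩) ?_ ?_ ?_ ?_ ?_
  · intro p _
    simp only [Finset.mem_filter, Finset.mem_univ, true_and]
    intro b hbD
    have : x + b.1 ∉ R0 := fun h => hbD ((hmemD b).mpr h)
    simp [WND, CFG, this]
  · intro w _; exact Finset.mem_univ _
  · intro p _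
    funext r
    have hmem : x + (r.1 - x) ∈ R0 := by rw [add_sub_cancel]; exact r.2
    simp only [WND, CFG, dif_pos hmem]
    congr 1
    exact Subtype.ext (by simp)
  · intro w hw
    simp only [Finset.mem_filter, Finset.mem_univ, true_and] at hw
    funext b
    by_cases hmem : x + b.1 ∈ R0
    · simp only [WND, CFG, dif_pos hmem]
      congr 1
      exact Subtype.ext (by simp)
    · have hbD : b.1 ∉ D := fun h => hmem ((hmemD b).mp h)
      simp only [WND, CFG, dif_neg hmem]
      exact (hw b hbD).symm
  · intro p _
    have hWW : WW R0 v p = CF B v D (WND B (CFG R0 v p) x) := by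
      unfold CF
      have step1 : ∀ b : B, (if b.1 ∈ D then wt v (WND B (CFG R0 v p) x b)
          else wt0 v (WND B (CFG R0 v p) x b))
          = (if b.1 ∈ D then wt v (WND B (CFG R0 v p) x b) else 1) := by
        intro b
        by_cases hbD : b.1 ∈ D
        · simp [hbD]
        · have : x + b.1 ∉ R0 := fun h => hbD ((hmemD b).mpr h)
          simp [hbD, WND, CFG, this, wt0]
      rw [Finset.prod_congr rfl (fun b _ => step1 b), ← Finset.prod_filter]
      unfold WW
      refine Finset.prod_bij (fun (r : R0) _ => (⟨r.1 - x, hx r.1 r.2⟩ : B)) ?_ ?_ ?_ ?_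
      · intro r _
        simp only [Finset.mem_filter, Finset.mem_univ, true_and]
        exact Finset.mem_image_of_mem _ r.2
      · intro r1 _ r2 _ heq
        have h12 : r1.1 - x = r2.1 - x := congrArg Subtype.val heq
        exact Subtype.ext (sub_left_injective h12)
      · intro b hb
        simp only [Finset.mem_filter, Finset.mem_univ, true_and] at hb
        refine ⟨⟨x + b.1, (hmemD b).mp hb⟩, Finset.mem_univ _, ?_⟩
        exact Subtype.ext (by simp)
      · intro r _
        have hmem : x + (r.1 - x) ∈ R0 := by rw [add_sub_cancel]; exact r.2
        simp only [WND, CFG, dif_pos hmem]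
        have hrr : (⟨x + (r.1 - x), hmem⟩ : R0) = r := Subtype.ext (by simp)
        rw [hrr]
    rw [hWW]

lemma caseA (B : Finset X) (v : A) (PSI : (B → A) → ℝ) (R0 : Finset X) (x : X)
    (hx : ∃ r ∈ R0, r - x ∉ B) :
    ∑ p : R0 → A, WW R0 v p * PSI (WND B (CFG R0 v p) x) = 0 := by
  classical
  set P : R0 → Prop := fun r => r.1 - x ∈ B with hP
  have hne : Nonempty {r : R0 // ¬ P r} := by
    obtain ⟨r, hr, hrB⟩ := hx
    exact ⟨⟨⟨r, hr⟩, hrB⟩⟩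
  set e := (Equiv.piEquivPiSubtypeProd P (fun _ : R0 => A)).symm with he
  rw [← Equiv.sum_comp e (fun p => WW R0 v p * PSI (WND B (CFG R0 v p) x))]
  rw [Fintype.sum_prod_type]
  have hwnd : ∀ (p1 : {r : R0 // P r} → A) (p2 p2' : {r : R0 // ¬ P r} → A),
      WND B (CFG R0 v (e (p1, p2))) x = WND B (CFG R0 v (e (p1, p2'))) x := by
    intro p1 p2 p2'
    funext b
    simp only [WND, CFG]
    by_cases hmem : x + b.1 ∈ R0
    · rw [dif_pos hmem, dif_pos hmem]
      have hPm : P ⟨x + b.1, hmem⟩ := by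
        show (x + b.1) - x ∈ B
        rw [add_sub_cancel_left]
        exact b.2
      rw [he]
      simp only [Equiv.piEquivPiSubtypeProd_symm_apply, dif_pos hPm]
    · rw [dif_neg hmem, dif_neg hmem]
  have hww : ∀ (p1 : {r : R0 // P r} → A) (p2 : {r : R0 // ¬ P r} → A),
      WW R0 v (e (p1, p2)) = (∏ r1 : {r : R0 // P r}, wt v (p1 r1)) *
        ∏ r2 : {r : R0 // ¬ P r}, wt v (p2 r2) := by
    intro p1 p2
    unfold WW
    rw [← Fintype.prod_subtype_mul_prod_subtype P (fun r => wt v (e (p1, p2) r))]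
    congr 1
    · apply Finset.prod_congr rfl
      intro r1 _
      congr 1
      rw [he]
      simp only [Equiv.piEquivPiSubtypeProd_symm_apply, dif_pos r1.2]
    · apply Finset.prod_congr rfl
      intro r2 _
      congr 1
      rw [he]
      simp only [Equiv.piEquivPiSubtypeProd_symm_apply, dif_neg r2.2]
  calc ∑ p1, ∑ p2, WW R0 v (e (p1, p2)) * PSI (WND B (CFG R0 v (e (p1, p2))) x)
      = ∑ p1 : {r : R0 // P r} → A,
          ((∏ r1, wt v (p1 r1)) * PSI (WND B (CFG R0 v (e (p1, fun _ => v))) x)) *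
          ∑ p2 : {r : R0 // ¬ P r} → A, ∏ r2, wt v (p2 r2) := by
        apply Finset.sum_congr rfl
        intro p1 _
        rw [Finset.mul_sum]
        apply Finset.sum_congr rfl
        intro p2 _
        rw [hww p1 p2, hwnd p1 p2 (fun _ => v)]
        ring
    _ = 0 := by
        rw [sumprod v]
        simp

lemma rel (B : Finset X) (hB0 : (0:X) ∈ B) (f : (B → A) → A) (φ : A → ℝ)
    (hyp3 : ∀ a : X → A, (Function.support fun x => φ (a x)).Finite →
      ∑ᶠ x, φ (induce B f a x) = ∑ᶠ x, φ (a x))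
    {v : A} (hv : φ v = 0) (hfv : φ (f fun _ => v) = 0) (R0 : Finset X) :
    ∑ x ∈ (SS B R0).filter (fun x => ∀ r ∈ R0, r - x ∈ B),
      NU B f φ hB0 v (R0.image (fun d => d - x)) = 0 := by
  classical
  have master : ∀ p : R0 → A,
      ∑ x ∈ SS B R0, PSI B f φ hB0 (WND B (CFG R0 v p) x) = 0 := by
    intro p
    have hC := consrel B f φ hyp3 hv hfv R0 (CFG R0 v p) (fun x hx => dif_neg hx)
    rw [← hC]
    apply Finset.sum_congr rfl
    intro x _
    show φ ((WND B (CFG R0 v p) x) ⟨0, hB0⟩) - φ (f (WND B (CFG R0 v p) x))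
        = φ (CFG R0 v p x) - φ (induce B f (CFG R0 v p) x)
    have h1 : (WND B (CFG R0 v p) x) ⟨0, hB0⟩ = CFG R0 v p x := by
      show CFG R0 v p (x + 0) = CFG R0 v p x
      rw [add_zero]
    rw [h1]
    rfl
  have h0 : ∑ x ∈ SS B R0, ∑ p : R0 → A,
      WW R0 v p * PSI B f φ hB0 (WND B (CFG R0 v p) x) = 0 := by
    rw [Finset.sum_comm]
    apply Finset.sum_eq_zero
    intro p _
    rw [← Finset.mul_sum, master p, mul_zero]
  calc ∑ x ∈ (SS B R0).filter (fun x => ∀ r ∈ R0, r - x ∈ B),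
        NU B f φ hB0 v (R0.image (fun d => d - x))
      = ∑ x ∈ SS B R0, if (∀ r ∈ R0, r - x ∈ B) then
          NU B f φ hB0 v (R0.image (fun d => d - x)) else 0 :=
        Finset.sum_filter _ _
    _ = ∑ x ∈ SS B R0, ∑ p : R0 → A,
          WW R0 v p * PSI B f φ hB0 (WND B (CFG R0 v p) x) := by
        apply Finset.sum_congr rfl
        intro x _
        by_cases hx : ∀ r ∈ R0, r - x ∈ B
        · rw [if_pos hx]
          exact (caseB B v (PSI B f φ hB0) R0 x hx).symm
        · rw [if_neg hx]
          push_neg at hx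
          exact (caseA B v (PSI B f φ hB0) R0 x hx).symm
    _ = 0 := h0

theorem classes (B : Finset X) (α : ℝ) (NUf : Finset X → ℝ)
    (hrel : ∀ R0 : Finset X, R0 ⊆ B → R0.Nonempty →
      ∑ x ∈ (SS B R0).filter (fun x => ∀ r ∈ R0, r - x ∈ B),
        NUf (R0.image (fun d => d - x)) = 0) :
    ∑ D ∈ B.powerset.filter (fun D => D ≠ ∅), α ^ (B.card - D.card) * NUf D = 0 := by
  classical
  set c : Finset X → Finset (Finset X) :=
    fun D => D.image (fun r => D.image (fun d => d - r)) with hc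
  set P := B.powerset.filter (fun D => D ≠ ∅) with hPdef
  have hctrans : ∀ (D : Finset X) (x : X), c (D.image (fun d => d - x)) = c D := by
    intro D x
    show (D.image (fun d => d - x)).image _ = D.image _
    rw [Finset.image_image]
    apply Finset.image_congr
    intro r0 _
    show (D.image (fun d => d - x)).image (fun d => d - (r0 - x)) = D.image (fun d => d - r0)
    rw [Finset.image_image]
    apply Finset.image_congr
    intro d _
    show (d - x) - (r0 - x) = d - r0
    abel
  rw [← Finset.sum_fiberwise_of_maps_to (t := P.image c)
    (fun D hD => Finset.mem_image_of_mem c hD)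
    (fun D => α ^ (B.card - D.card) * NUf D)]
  apply Finset.sum_eq_zero
  intro y hy
  obtain ⟨D0, hD0P, hcD0⟩ := Finset.mem_image.mp hy
  have hD0B : D0 ⊆ B := Finset.mem_powerset.mp (Finset.mem_filter.mp hD0P).1
  have hD0ne : D0.Nonempty := Finset.nonempty_of_ne_empty (Finset.mem_filter.mp hD0P).2
  set m : X → Finset X := fun x => D0.image (fun d => d - x) with hm
  set ZB := (SS B D0).filter (fun x => ∀ r ∈ D0, r - x ∈ B) with hZB
  have hmemZB : ∀ (x : X), (∀ r ∈ D0, r - x ∈ B) → x ∈ ZB := by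
    intro x hx
    rw [hZB, Finset.mem_filter]
    refine ⟨?_, hx⟩
    obtain ⟨r, hr⟩ := hD0ne
    apply Finset.mem_union_right
    exact Finset.mem_image₂.mpr ⟨r, hr, r - x, hx r hr, by abel⟩
  have hmB : ∀ x ∈ ZB, m x ⊆ B := by
    intro x hx
    rw [hZB, Finset.mem_filter] at hx
    rw [hm]
    exact Finset.image_subset_iff.mpr hx.2
  have hmm : ∀ (x z : X), m (x - z) = (m x).image (fun d => d + z) := by
    intro x z
    rw [hm, Finset.image_image]
    apply Finset.image_congr
    intro d _
    show d - (x - z) = (d - x) + z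
    abel
  have hfiber : P.filter (fun D => c D = y) = ZB.image m := by
    ext D
    simp only [Finset.mem_filter, Finset.mem_image]
    constructor
    · rintro ⟨hDP, hcD⟩
      have hDB : D ⊆ B := Finset.mem_powerset.mp (Finset.mem_filter.mp hDP).1
      obtain ⟨r0, hr0⟩ := hD0ne
      have h1 : D0.image (fun d => d - r0) ∈ c D := by
        rw [hcD, ← hcD0]
        exact Finset.mem_image_of_mem _ hr0
      obtain ⟨r1, hr1, hr1eq⟩ := Finset.mem_image.mp h1
      have hDeq : D = m (r0 - r1) := by
        have e1 : (D.image (fun d => d - r1)).image (fun d => d + r1) = D := by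
          rw [Finset.image_image]
          have hcomp : ((fun d => d + r1) ∘ fun d : X => d - r1) = id := by
            funext d; simp
          rw [hcomp, Finset.image_id]
        rw [← e1, hr1eq, Finset.image_image]
        rw [hm]
        apply Finset.image_congr
        intro d _
        show (d - r0) + r1 = d - (r0 - r1)
        abel
      refine ⟨r0 - r1, ?_, hDeq.symm⟩
      apply hmemZB
      intro r hr
      apply hDB
      rw [hDeq, hm]
      exact Finset.mem_image_of_mem _ hr
    · rintro ⟨x, hxZB, hmx⟩
      rw [hZB, Finset.mem_filter] at hxZB
      constructor
      · rw [hPdef, Finset.mem_filter, Finset.mem_powerset]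
        constructor
        · rw [← hmx, hm]
          exact Finset.image_subset_iff.mpr hxZB.2
        · rw [← hmx, hm]
          exact (hD0ne.image _).ne_empty
      · rw [← hmx, hm, hctrans, hcD0]
  rw [hfiber]
  have hcard : ∀ D ∈ ZB.image m, D.card = D0.card := by
    intro D hD
    obtain ⟨x, _, hmx⟩ := Finset.mem_image.mp hD
    rw [← hmx, hm]
    exact Finset.card_image_of_injective _ sub_left_injective
  have hcardconst : ∀ D ∈ ZB.image m,
      (ZB.filter (fun x => m x = D)).card = (ZB.filter (fun x => m x = D0)).card := by
    intro D hD
    obtain ⟨x1, hx1ZB, hmx1⟩ := Finset.mem_image.mp hD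
    have hDB : D ⊆ B := by rw [← hmx1]; exact hmB x1 hx1ZB
    refine Finset.card_nbij' (fun x => x - x1) (fun x => x + x1) ?_ ?_ ?_ ?_
    · intro x hx
      rw [Finset.mem_coe, Finset.mem_filter] at hx
      obtain ⟨hxZB, hmx⟩ := hx
      have hmxx1 : m (x - x1) = D0 := by
        rw [hmm x x1, hmx, ← hmx1, hm, Finset.image_image]
        have hcomp : ((fun d => d + x1) ∘ fun d : X => d - x1) = id := by
          funext d; simp
        rw [hcomp, Finset.image_id]
      rw [Finset.mem_coe, Finset.mem_filter]
      refine ⟨hmemZB _ ?_, hmxx1⟩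
      intro r hr
      apply hD0B
      have hrr : r - (x - x1) ∈ m (x - x1) := by
        rw [hm]; exact Finset.mem_image_of_mem _ hr
      rwa [hmxx1] at hrr
    · intro x hx
      rw [Finset.mem_coe, Finset.mem_filter] at hx
      obtain ⟨hxZB, hmx⟩ := hx
      have hmxx1 : m (x + x1) = D := by
        have hxx : x + x1 = x - (-x1) := by abel
        rw [hxx, hmm x (-x1), hmx, ← hmx1]
        show D0.image (fun d => d + -x1) = D0.image (fun d => d - x1)
        apply Finset.image_congr
        intro d _
        show d + -x1 = d - x1
        abel
      rw [Finset.mem_coe, Finset.mem_filter]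
      refine ⟨hmemZB _ ?_, hmxx1⟩
      intro r hr
      apply hDB
      have hrr : r - (x + x1) ∈ m (x + x1) := by
        rw [hm]; exact Finset.mem_image_of_mem _ hr
      rwa [hmxx1] at hrr
    · intro x _; simp
    · intro x _; simp
  have hrel1 : ∑ x ∈ ZB, NUf (m x) = 0 := hrel D0 hD0B hD0ne
  rw [Finset.sum_comp NUf m] at hrel1
  have hconst : ((ZB.filter (fun x => m x = D0)).card : ℝ) * ∑ D ∈ ZB.image m, NUf D = 0 := by
    rw [Finset.mul_sum, ← hrel1]
    apply Finset.sum_congr rfl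
    intro D hD
    rw [hcardconst D hD, nsmul_eq_mul]
  have hk : 0 < (ZB.filter (fun x => m x = D0)).card := by
    apply Finset.card_pos.mpr
    refine ⟨0, Finset.mem_filter.mpr ⟨hmemZB 0 ?_, ?_⟩⟩
    · intro r hr; rw [sub_zero]; exact hD0B hr
    · show D0.image (fun d => d - 0) = D0
      have hid : (fun d : X => d - 0) = id := by funext d; simp
      rw [hid, Finset.image_id]
  have hsum0 : ∑ D ∈ ZB.image m, NUf D = 0 := by
    rcases mul_eq_zero.mp hconst with h | h
    · exact absurd h (Nat.cast_ne_zero.mpr hk.ne')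
    · exact h
  calc ∑ D ∈ ZB.image m, α ^ (B.card - D.card) * NUf D
      = ∑ D ∈ ZB.image m, α ^ (B.card - D0.card) * NUf D := by
        apply Finset.sum_congr rfl; intro D hD; rw [hcard D hD]
    _ = α ^ (B.card - D0.card) * ∑ D ∈ ZB.image m, NUf D := by rw [Finset.mul_sum]
    _ = 0 := by rw [hsum0, mul_zero]

lemma key (B : Finset X) (v : A) (w : B → A) :
    ∑ D ∈ B.powerset, (Fintype.card A : ℝ) ^ (B.card - D.card) * CF B v D w = 1 := by
  classical
  set w' : X → A := fun y => if h : y ∈ B then w ⟨y, h⟩ else v with hw'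
  have hcf : ∀ D ∈ B.powerset, (Fintype.card A : ℝ) ^ (B.card - D.card) * CF B v D w
      = (∏ y ∈ D, wt v (w' y)) * ∏ y ∈ B \ D, ((Fintype.card A : ℝ) * wt0 v (w' y)) := by
    intro D hD
    rw [Finset.mem_powerset] at hD
    have h1 : CF B v D w = ∏ y ∈ B, (if y ∈ D then wt v (w' y) else wt0 v (w' y)) := by
      unfold CF
      rw [← Finset.prod_coe_sort B (fun y => if y ∈ D then wt v (w' y) else wt0 v (w' y))]
      apply Finset.prod_congr rfl
      intro b _
      have hwb : w' b.1 = w b := by rw [hw']; simp only [dif_pos b.2]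
      rw [hwb]
    have h2 : ∏ y ∈ B, (if y ∈ D then wt v (w' y) else wt0 v (w' y))
        = (∏ y ∈ B \ D, wt0 v (w' y)) * ∏ y ∈ D, wt v (w' y) := by
      rw [← Finset.prod_sdiff hD]
      congr 1
      · apply Finset.prod_congr rfl
        intro y hy
        rw [if_neg (Finset.mem_sdiff.mp hy).2]
      · apply Finset.prod_congr rfl
        intro y hy
        rw [if_pos hy]
    have h3 : (Fintype.card A : ℝ) ^ (B.card - D.card)
        = ∏ _y ∈ B \ D, (Fintype.card A : ℝ) := by
      rw [Finset.prod_const, Finset.card_sdiff_of_subset hD]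
    rw [h1, h2, h3, Finset.prod_mul_distrib]
    ring
  rw [Finset.sum_congr rfl hcf, ← Finset.prod_add]
  apply Finset.prod_eq_one
  intro y _
  by_cases hy : w' y = v <;> simp [wt, wt0, hy]

lemma nu_empty (B : Finset X) (f : (B → A) → A) (φ : A → ℝ) (hB0 : (0:X) ∈ B) (v : A)
    (hv : φ v = 0) (hfv : φ (f fun _ => v) = 0) :
    NU B f φ hB0 v ∅ = 0 := by
  unfold NU
  rw [Fintype.sum_eq_single (fun _ : B => v)]
  · unfold PSI
    simp [hv, hfv]
  · intro w hw
    have hex : ∃ b : B, w b ≠ v := by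
      by_contra hcon
      push_neg at hcon
      exact hw (funext hcon)
    obtain ⟨b, hb⟩ := hex
    have hz : CF B v ∅ w = 0 := by
      apply Finset.prod_eq_zero (Finset.mem_univ b)
      simp [wt0, hb]
    rw [hz, zero_mul]

end Stmt12Aux

theorem stmt12 {X A : Type*} [AddCommGroup X] [DecidableEq X] [Fintype A] [Nonempty A]
    (B : Finset X) (hB0 : (0 : X) ∈ B) (hBsym : ∀ b : X, b ∈ B ↔ -b ∈ B)
    (f : (B → A) → A) (φ : A → ℝ)
    (hcons : conserved B f φ)
    (hquot : ∃ K : AddSubgroup X, AddSubgroup.FiniteIndex K ∧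
      Set.InjOn (QuotientAddGroup.mk' K) ((B : Set X) + (B : Set X))) :
    (∑ w : B → A, φ (f w)) = (Fintype.card A : ℝ) ^ (B.card - 1) * ∑ a : A, φ a := by
  classical
  open Stmt12Aux in
  obtain ⟨v, hv⟩ := hcons.1
  have hfv : φ (f fun _ => v) = 0 := Stmt12Aux.vac B f φ hcons.2.1 hcons.2.2 hv
  have hINV : ∑ w : B → A, Stmt12Aux.PSI B f φ hB0 w
      = ∑ D ∈ B.powerset, (Fintype.card A : ℝ) ^ (B.card - D.card)
          * Stmt12Aux.NU B f φ hB0 v D := by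
    unfold Stmt12Aux.NU
    calc ∑ w : B → A, Stmt12Aux.PSI B f φ hB0 w
        = ∑ w : B → A, (∑ D ∈ B.powerset, (Fintype.card A : ℝ) ^ (B.card - D.card)
            * Stmt12Aux.CF B v D w) * Stmt12Aux.PSI B f φ hB0 w := by
          apply Finset.sum_congr rfl
          intro w _
          rw [Stmt12Aux.key B v w, one_mul]
      _ = ∑ w : B → A, ∑ D ∈ B.powerset, ((Fintype.card A : ℝ) ^ (B.card - D.card)
            * Stmt12Aux.CF B v D w) * Stmt12Aux.PSI B f φ hB0 w := by
          apply Finset.sum_congr rfl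
          intro w _
          rw [Finset.sum_mul]
      _ = ∑ D ∈ B.powerset, ∑ w : B → A, ((Fintype.card A : ℝ) ^ (B.card - D.card)
            * Stmt12Aux.CF B v D w) * Stmt12Aux.PSI B f φ hB0 w := Finset.sum_comm
      _ = ∑ D ∈ B.powerset, (Fintype.card A : ℝ) ^ (B.card - D.card)
            * ∑ w : B → A, Stmt12Aux.CF B v D w * Stmt12Aux.PSI B f φ hB0 w := by
          apply Finset.sum_congr rfl
          intro D _
          rw [Finset.mul_sum]
          apply Finset.sum_congr rfl
          intro w _
          ring
  have hV : ∑ D ∈ B.powerset, (Fintype.card A : ℝ) ^ (B.card - D.card)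
      * Stmt12Aux.NU B f φ hB0 v D = 0 := by
    rw [← Finset.sum_filter_add_sum_filter_not B.powerset (fun D => D ≠ ∅)]
    have hA : ∑ D ∈ B.powerset.filter (fun D => ¬ D ≠ ∅),
        (Fintype.card A : ℝ) ^ (B.card - D.card) * Stmt12Aux.NU B f φ hB0 v D = 0 := by
      apply Finset.sum_eq_zero
      intro D hD
      rw [Finset.mem_filter] at hD
      rw [not_not.mp hD.2, Stmt12Aux.nu_empty B f φ hB0 v hv hfv, mul_zero]
    have hBB : ∑ D ∈ B.powerset.filter (fun D => D ≠ ∅),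
        (Fintype.card A : ℝ) ^ (B.card - D.card) * Stmt12Aux.NU B f φ hB0 v D = 0 :=
      Stmt12Aux.classes B (Fintype.card A : ℝ) (Stmt12Aux.NU B f φ hB0 v)
        (fun R0 _ _ => Stmt12Aux.rel B hB0 f φ hcons.2.2 hv hfv R0)
    rw [hA, hBB, add_zero]
  have hPsi : ∑ w : B → A, Stmt12Aux.PSI B f φ hB0 w = 0 := by rw [hINV, hV]
  have hsplit : ∑ w : B → A, φ (w ⟨0, hB0⟩) - ∑ w : B → A, φ (f w) = 0 := by
    rw [← Finset.sum_sub_distrib]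
    exact hPsi
  have hpoint : ∑ w : B → A, φ (w ⟨0, hB0⟩)
      = (Fintype.card A : ℝ) ^ (B.card - 1) * ∑ a : A, φ a := by
    set b0 : B := (⟨0, hB0⟩ : B) with hb0
    rw [← Equiv.sum_comp (Equiv.funSplitAt b0 A).symm (fun w : B → A => φ (w b0))]
    rw [Fintype.sum_prod_type]
    have happ : ∀ (a : A) (g : {j : B // j ≠ b0} → A),
        ((Equiv.funSplitAt b0 A).symm (a, g)) b0 = a := by
      intro a g
      simp [Equiv.funSplitAt, Equiv.piSplitAt]
    calc ∑ a : A, ∑ g : {j : B // j ≠ b0} → A,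
          φ (((Equiv.funSplitAt b0 A).symm (a, g)) b0)
        = ∑ a : A, ∑ _g : {j : B // j ≠ b0} → A, φ a := by
          apply Finset.sum_congr rfl
          intro a _
          apply Finset.sum_congr rfl
          intro g _
          rw [happ]
      _ = ∑ a : A, (Fintype.card ({j : B // j ≠ b0} → A) : ℝ) * φ a := by
          apply Finset.sum_congr rfl
          intro a _
          rw [Finset.sum_const, Finset.card_univ, nsmul_eq_mul]
      _ = (Fintype.card A : ℝ) ^ (B.card - 1) * ∑ a : A, φ a := by
          rw [← Finset.mul_sum]
          congr 1
          rw [Fintype.card_fun]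
          have hsub : Fintype.card {j : B // j ≠ b0} = B.card - 1 := by
            simp [Fintype.card_subtype_compl, Fintype.card_coe]
          rw [hsub]
          push_cast [Nat.cast_pow]
          rfl
  linarith [hsplit, hpoint]
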